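/- Let T be a homogeneous coarsely oriented tree such that every vertex has at least two neighbors of strictly greater height and at least two neighbors of strictly smaller height. Then there exists β₀ > 0 such that for every β with 0 ≤ β ≤ β₀ there exist C > 0 and a lamination of T by lines of slope (β, C). -/

import Mathlib

universe u

/-- A coarsely oriented tree is homogeneous if the multiset of height changes along the
edges incident to a vertex is the same for all vertices; equivalently there is a
bijection between the neighbor sets of any two vertices matching height changes. -/
def Homogeneous {V : Type*} (G : SimpleGraph V) (h : V → ℝ) : Prop :=
  ∀ v w : V, ∃ σ : G.neighborSet v ≃ G.neighborSet w,
    ∀ u : G.neighborSet v, h u - h v = h (σ u) - h w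

/-- A line of slope `(β, C)` in a coarsely oriented tree: a bi-infinite geodesic along
which the height changes at rate `β` up to an additive error `C`. -/
def IsSlopeLine {V : Type*} (G : SimpleGraph V) (h : V → ℝ) (β C : ℝ) (γ : ℤ → V) : Prop :=
  (∀ n m : ℤ, G.dist (γ n) (γ m) = (n - m).natAbs) ∧
  (∀ n m : ℤ, |h (γ n) - h (γ m) - β * (n - m)| ≤ C)

/-- A lamination of a coarsely oriented tree by lines of slope `(β, C)`: a family of
such lines whose images partition the vertex set, so that exactly one line of the
family passes through each vertex. -/
def IsLamination {V : Type*} {ι : Type*} (G : SimpleGraph V) (h : V → ℝ) (β C : ℝ)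
    (L : ι → ℤ → V) : Prop :=
  (∀ i : ι, IsSlopeLine G h β C (L i)) ∧
  (∀ v : V, ∃! i : ι, v ∈ Set.range (L i))

open scoped Classical

section Mine


/-- The balanced counting function: `Ff t n ≈ t*n`, integer-valued, with doubled letters. -/
noncomputable def Ff (t : ℝ) (n : ℤ) : ℤ := ⌊t * ((n / 2 : ℤ) : ℝ)⌋ + ⌊t * (((n + 1) / 2 : ℤ) : ℝ)⌋

/-- The letter at position `n` (0 or 1). -/
noncomputable def Pp (t : ℝ) (n : ℤ) : ℤ := Ff t (n + 1) - Ff t n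

lemma Pp_eq (t : ℝ) (n : ℤ) : Pp t n = ⌊t * ((n / 2 : ℤ) + 1 : ℝ)⌋ - ⌊t * ((n / 2 : ℤ) : ℝ)⌋ := by
  unfold Pp Ff
  have h1 : (n + 1 + 1) / 2 = n / 2 + 1 := by omega
  rw [h1]
  push_cast
  ring_nf

lemma Pp_mem (t : ℝ) (ht0 : 0 ≤ t) (ht1 : t ≤ 1) (n : ℤ) : Pp t n = 0 ∨ Pp t n = 1 := by
  rw [Pp_eq]
  set x : ℝ := ((n / 2 : ℤ) : ℝ)
  have h1 : ⌊t * x⌋ ≤ ⌊t * (x + 1)⌋ := by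
    apply Int.floor_le_floor
    nlinarith
  have h2 : ⌊t * (x + 1)⌋ ≤ ⌊t * x⌋ + 1 := by
    have : t * (x + 1) ≤ t * x + 1 := by nlinarith
    calc ⌊t * (x + 1)⌋ ≤ ⌊t * x + 1⌋ := Int.floor_le_floor this
      _ = ⌊t * x⌋ + 1 := Int.floor_add_one _
  omega

lemma Pp_pair (t : ℝ) (j : ℤ) : Pp t (2 * j) = Pp t (2 * j + 1) := by
  rw [Pp_eq, Pp_eq]
  have h1 : (2 * j) / 2 = j := by omega
  have h2 : (2 * j + 1) / 2 = j := by omega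
  rw [h1, h2]

lemma Ff_bound (t : ℝ) (n : ℤ) : |((Ff t n : ℤ) : ℝ) - t * n| ≤ 2 := by
  unfold Ff
  set k1 : ℤ := n / 2
  set k2 : ℤ := (n + 1) / 2
  have hk : k1 + k2 = n := by omega
  have h1 : |((⌊t * (k1 : ℝ)⌋ : ℝ)) - t * k1| ≤ 1 := by
    have := Int.sub_one_lt_floor (t * (k1 : ℝ))
    have := Int.floor_le (t * (k1 : ℝ))
    rw [abs_le]; constructor <;> linarith
  have h2 : |((⌊t * (k2 : ℝ)⌋ : ℝ)) - t * k2| ≤ 1 := by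
    have := Int.sub_one_lt_floor (t * (k2 : ℝ))
    have := Int.floor_le (t * (k2 : ℝ))
    rw [abs_le]; constructor <;> linarith
  have hn : (n : ℝ) = (k1 : ℝ) + (k2 : ℝ) := by exact_mod_cast hk.symm
  rw [hn]
  push_cast
  rw [abs_le] at *
  constructor <;> [nlinarith; nlinarith]

lemma Ff_zero (t : ℝ) : Ff t 0 = 0 := by
  unfold Ff
  norm_num

/-- If an integer-valued function increases somewhere on `[0,m]`, some step increases. -/
lemma exists_step (g : ℤ → ℤ) (m : ℕ) (h : g 0 < g m) : ∃ j : ℤ, g j < g (j + 1) := by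
  induction m with
  | zero =>
    simp only [Nat.cast_zero] at h
    omega
  | succ k ih =>
    by_cases hk : g 0 < g k
    · exact ih hk
    · refine ⟨(k : ℤ), ?_⟩
      push_cast at h
      omega

lemma exists_Pp_one (t : ℝ) (ht0 : 0 < t) (ht1 : t ≤ 1) : ∃ n : ℤ, Pp t n = 1 := by
  obtain ⟨m, hm⟩ := exists_nat_gt (2 / t)
  have htm : (2 : ℝ) < t * m := by
    rw [div_lt_iff₀ ht0] at hm
    nlinarith
  have hFm : (2 : ℝ) ≤ ((Ff t ((2 * m : ℕ) : ℤ) : ℤ) : ℝ) := by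
    have hb := Ff_bound t ((2 * m : ℕ) : ℤ)
    have h4 : t * (((2 * m : ℕ) : ℤ) : ℝ) > 4 := by
      have h2 : ((((2 * m : ℕ) : ℤ)) : ℝ) = 2 * (m:ℝ) := by push_cast; ring
      rw [h2]
      nlinarith
    rw [abs_le] at hb
    linarith
  have hF0 : Ff t 0 = 0 := Ff_zero t
  have hlt : Ff t 0 < Ff t ((2 * m : ℕ) : ℤ) := by
    rw [hF0]
    have : (0:ℝ) < ((Ff t ((2 * m : ℕ) : ℤ) : ℤ) : ℝ) := by linarith
    exact_mod_cast this
  obtain ⟨j, hj⟩ := exists_step (fun n => Ff t n) (2 * m) hlt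
  rcases Pp_mem t ht0.le ht1 j with h0 | h1
  · exfalso; unfold Pp at h0; omega
  · exact ⟨j, h1⟩

lemma exists_Pp_zero (t : ℝ) (ht0 : 0 ≤ t) (ht1 : t < 1) : ∃ n : ℤ, Pp t n = 0 := by
  obtain ⟨m, hm⟩ := exists_nat_gt (2 / (1 - t))
  have h1t : 0 < 1 - t := by linarith
  have hm2 : (2:ℝ) < (1 - t) * m := by
    rw [div_lt_iff₀ h1t] at hm
    nlinarith
  have hFm : ((Ff t ((2 * m : ℕ) : ℤ) : ℤ) : ℝ) ≤ 2 * (m:ℝ) - 2 := by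
    have hb := Ff_bound t ((2 * m : ℕ) : ℤ)
    rw [abs_le] at hb
    have h2 : t * ((((2 * m : ℕ) : ℤ)) : ℝ) = t * (2 * (m:ℝ)) := by push_cast; ring
    rw [h2] at hb
    nlinarith
  have hlt : Ff t ((2 * m : ℕ) : ℤ) < ((2 * m : ℕ) : ℤ) := by
    have h2 : ((((2 * m : ℕ) : ℤ)) : ℝ) = 2 * (m:ℝ) := by push_cast; ring
    have : ((Ff t ((2 * m : ℕ) : ℤ) : ℤ) : ℝ) < ((((2 * m : ℕ) : ℤ)) : ℝ) := by
      rw [h2]; linarith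
    exact_mod_cast this
  have hF0 : Ff t 0 = 0 := Ff_zero t
  obtain ⟨j, hj⟩ := exists_step (fun n => n - Ff t n) (2 * m)
    (by simp only [sub_zero, hF0]; omega)
  rcases Pp_mem t ht0 ht1.le j with h0 | h1
  · exact ⟨j, h0⟩
  · exfalso; unfold Pp at h1; omega

variable {V : Type u} {G : SimpleGraph V}

/-- In a tree, every path realizes the distance. -/
lemma tree_path_length (hT : G.IsTree) {x y : V} (p : G.Walk x y) (hp : p.IsPath) :
    p.length = G.dist x y := by
  obtain ⟨q, hq, hql⟩ := hT.isConnected.exists_path_of_dist x y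
  have := hT.IsAcyclic.path_unique ⟨p, hp⟩ ⟨q, hq⟩
  rw [← hql]
  exact congrArg SimpleGraph.Walk.length (congrArg Subtype.val this)

lemma tree_adj_dist_ne (hT : G.IsTree) (x : V) {u w : V} (h : G.Adj u w) :
    G.dist x u ≠ G.dist x w := by
  classical
  intro heq
  obtain ⟨q, hq, hql⟩ := hT.isConnected.exists_path_of_dist x w
  by_cases hu : u ∈ q.support
  · have h1 : (q.takeUntil u hu).IsPath := hq.takeUntil hu
    have h2 := tree_path_length hT _ h1
    have h3 := congrArg SimpleGraph.Walk.length (q.take_spec hu)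
    rw [SimpleGraph.Walk.length_append] at h3
    have h4 : (q.dropUntil u hu).length ≠ 0 := by
      intro h0
      exact h.ne (SimpleGraph.Walk.eq_of_length_eq_zero h0)
    omega
  · have hq' : (SimpleGraph.Walk.cons h q.reverse).IsPath := by
      apply (hq.reverse).cons
      rw [SimpleGraph.Walk.support_reverse, List.mem_reverse]
      exact hu
    have h2 := tree_path_length hT _ hq'
    rw [SimpleGraph.Walk.length_cons, SimpleGraph.Walk.length_reverse] at h2
    rw [SimpleGraph.dist_comm] at h2
    omega

lemma tree_adj_dist (hT : G.IsTree) (x : V) {u w : V} (h : G.Adj u w) :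
    G.dist x u + 1 = G.dist x w ∨ G.dist x w + 1 = G.dist x u := by
  have h1 : G.dist x w ≤ G.dist x u + 1 := by
    have := hT.isConnected.dist_triangle (u := x) (v := u) (w := w)
    rwa [SimpleGraph.dist_eq_one_iff_adj.mpr h] at this
  have h2 : G.dist x u ≤ G.dist x w + 1 := by
    have := hT.isConnected.dist_triangle (u := x) (v := w) (w := u)
    rwa [SimpleGraph.dist_eq_one_iff_adj.mpr h.symm] at this
  have h3 := tree_adj_dist_ne hT x h
  omega

/-- In a tree, the neighbor on the side of the basepoint is unique. -/
lemma tree_closer_unique (hT : G.IsTree) (x : V) {u w₁ w₂ : V}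
    (h1 : G.Adj u w₁) (h2 : G.Adj u w₂)
    (hd1 : G.dist x w₁ + 1 = G.dist x u) (hd2 : G.dist x w₂ + 1 = G.dist x u) :
    w₁ = w₂ := by
  have key : ∀ {w : V}, G.Adj u w → G.dist x w + 1 = G.dist x u →
      ∃ p : G.Walk u x, p.IsPath ∧ p.getVert 1 = w := by
    intro w hw hdw
    classical
    obtain ⟨q, hq, hql⟩ := hT.isConnected.exists_path_of_dist w x
    have hu : u ∉ q.support := by
      intro hu
      have hdrop : (q.dropUntil u hu).IsPath := hq.dropUntil hu
      have hlen := tree_path_length hT _ hdrop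
      have h3 := congrArg SimpleGraph.Walk.length (q.take_spec hu)
      rw [SimpleGraph.Walk.length_append] at h3
      rw [SimpleGraph.dist_comm] at hql
      rw [SimpleGraph.dist_comm] at hlen
      omega
    refine ⟨SimpleGraph.Walk.cons hw q, hq.cons hu, ?_⟩
    rw [SimpleGraph.Walk.getVert_cons_succ, SimpleGraph.Walk.getVert_zero]
  obtain ⟨p1, hp1, hg1⟩ := key h1 hd1
  obtain ⟨p2, hp2, hg2⟩ := key h2 hd2
  have := hT.IsAcyclic.path_unique ⟨p1, hp1⟩ ⟨p2, hp2⟩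
  have hpe : p1 = p2 := congrArg Subtype.val this
  rw [← hg1, ← hg2, hpe]

/-- A non-backtracking chain in a tree is a geodesic. -/
lemma tree_chain_dist (hT : G.IsTree) (x : ℕ → V)
    (hadj : ∀ i, G.Adj (x i) (x (i + 1))) (hnb : ∀ i, x (i + 2) ≠ x i) :
    ∀ k, G.dist (x 0) (x k) = k := by
  intro k
  induction k using Nat.strong_induction_on with
  | _ k ih =>
    match k with
    | 0 => exact SimpleGraph.dist_self
    | 1 => exact SimpleGraph.dist_eq_one_iff_adj.mpr (hadj 0)
    | (k + 2) =>
      have ih1 : G.dist (x 0) (x (k + 1)) = k + 1 := ih (k + 1) (by omega)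
      have ih0 : G.dist (x 0) (x k) = k := ih k (by omega)
      rcases tree_adj_dist hT (x 0) (hadj (k + 1)) with h | h
      · rw [ih1] at h
        exact h ▸ rfl
      · exfalso
        rw [show k+1+1 = k+2 from rfl, ih1] at h
        have heq : x (k + 2) = x k := by
          have hd1 : G.dist (x 0) (x (k + 2)) + 1 = G.dist (x 0) (x (k + 1)) := by omega
          have hd2 : G.dist (x 0) (x k) + 1 = G.dist (x 0) (x (k + 1)) := by omega
          exact tree_closer_unique hT (x 0) (hadj (k + 1)) (hadj k).symm hd1 hd2
        exact hnb k heq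


lemma tree_exists_parent (hT : G.IsTree) {r v : V} (hv : v ≠ r) :
    ∃ u, G.Adj v u ∧ G.dist r u + 1 = G.dist r v := by
  classical
  obtain ⟨p, hp, hl⟩ := hT.isConnected.exists_path_of_dist v r
  cases p with
  | nil => exact absurd rfl hv
  | @cons _ u _ hadj q =>
    refine ⟨u, hadj, ?_⟩
    have hq := tree_path_length hT q hp.of_cons
    rw [SimpleGraph.Walk.length_cons] at hl
    have h1 : G.dist r u = G.dist u r := SimpleGraph.dist_comm
    have h2 : G.dist r v = G.dist v r := SimpleGraph.dist_comm
    omega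

end Mine

section Constr
variable {V : Type u} (G : SimpleGraph V) (h : V → ℝ) (r : V) (par : V → V) (a b t : ℝ)

noncomputable def stepval (n : ℤ) : ℝ := if Pp t n = 1 then a else -b

lemma stepval_mem (n : ℤ) : stepval a b t n = a ∨ stepval a b t n = -b := by
  unfold stepval; split <;> simp

lemma stepval_fourset (n : ℤ) :
    stepval a b t n = a ∨ stepval a b t n = b ∨ stepval a b t n = -a ∨ stepval a b t n = -b := by
  rcases stepval_mem a b t n with h1 | h1 <;> simp [h1]

lemma negstepval_fourset (n : ℤ) :
    -stepval a b t n = a ∨ -stepval a b t n = b ∨ -stepval a b t n = -a ∨ -stepval a b t n = -b := by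
  rcases stepval_mem a b t n with h1 | h1 <;> simp [h1]

lemma stepval_ne_of_P (ha : 0 < a) (hb : 0 < b) {m n : ℤ} (hP : Pp t m = Pp t n) :
    stepval a b t m ≠ -stepval a b t n := by
  unfold stepval
  rw [hP]
  split <;> intro hc <;> linarith

lemma stepval_ne_of_ne (ha : 0 < a) (hb : 0 < b) (hab : a ≠ b) (m n : ℤ) :
    stepval a b t m ≠ -stepval a b t n := by
  unfold stepval
  split <;> split <;> intro hc <;> first
    | linarith
    | (exact hab (by linarith))

noncomputable def pickv (v : V) (c : ℝ) (w : V) : V :=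
  if hx : ∃ u, G.Adj v u ∧ h u - h v = c ∧ u ≠ w then hx.choose else v

lemma pickv_spec {v : V} {c : ℝ} {w : V} (hx : ∃ u, G.Adj v u ∧ h u - h v = c ∧ u ≠ w) :
    G.Adj v (pickv G h v c w) ∧ h (pickv G h v c w) - h v = c ∧ pickv G h v c w ≠ w := by
  unfold pickv
  rw [dif_pos hx]
  exact hx.choose_spec

def SeedGood (c : ℝ) (φ : ℤ) : Prop :=
  stepval a b t φ ≠ -stepval a b t (φ - 1) ∧
  (a ≠ b → stepval a b t φ ≠ c ∧ -stepval a b t (φ - 1) ≠ c)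

noncomputable def seedφ (c : ℝ) : ℤ :=
  if hx : ∃ φ : ℤ, SeedGood a b t c φ then hx.choose else 1

lemma seed_exists (ha : 0 < a) (hb : 0 < b) (ht0 : 0 < t) (ht1 : t < 1) (c : ℝ) :
    ∃ φ : ℤ, SeedGood a b t c φ := by
  by_cases hab : a = b
  · refine ⟨1, ?_, fun hne => absurd hab hne⟩
    apply stepval_ne_of_P a b t ha hb
    have hpp := Pp_pair t 0
    norm_num at hpp
    rw [show (1:ℤ) - 1 = 0 from by ring]
    exact hpp.symm
  · have hne := stepval_ne_of_ne a b t ha hb hab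
    by_cases hca : c = a
    · obtain ⟨n, hn⟩ := exists_Pp_zero t ht0.le ht1
      refine ⟨n, hne n (n - 1), ?_⟩
      intro _
      constructor
      · rw [hca]; unfold stepval; rw [hn]; norm_num; linarith
      · rw [hca]
        rcases stepval_mem a b t (n - 1) with h1 | h1 <;> rw [h1] <;> intro hc <;>
          first | linarith | (exact hab (by linarith))
    · by_cases hcb : c = -b
      · obtain ⟨n, hn⟩ := exists_Pp_one t ht0 ht1.le
        refine ⟨n, hne n (n - 1), ?_⟩
        intro _
        constructor
        · rw [hcb]; unfold stepval; rw [if_pos hn]; intro hc; linarith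
        · rw [hcb]
          rcases stepval_mem a b t (n - 1) with h1 | h1 <;> rw [h1] <;> intro hc <;>
            first | linarith | (exact hab (by linarith))
      · by_cases hcna : c = -a
        · obtain ⟨n, hn⟩ := exists_Pp_zero t ht0.le ht1
          refine ⟨n + 1, hne (n + 1) (n + 1 - 1), ?_⟩
          intro _
          constructor
          · rw [hcna]
            rcases stepval_mem a b t (n + 1) with h1 | h1 <;> rw [h1] <;> intro hc <;>
              first | linarith | (exact hab (by linarith))
          · rw [hcna, show n + 1 - 1 = n from by ring]
            unfold stepval; rw [hn]; norm_num; linarith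
        · by_cases hcbb : c = b
          · obtain ⟨n, hn⟩ := exists_Pp_one t ht0 ht1.le
            refine ⟨n + 1, hne (n + 1) (n + 1 - 1), ?_⟩
            intro _
            constructor
            · rw [hcbb]
              rcases stepval_mem a b t (n + 1) with h1 | h1 <;> rw [h1] <;> intro hc <;>
                first | linarith | (exact hab (by linarith))
            · rw [hcbb, show n + 1 - 1 = n from by ring]
              unfold stepval; rw [if_pos hn]; intro hc; linarith
          · refine ⟨0, hne 0 (0 - 1), ?_⟩
            intro _
            constructor
            · rcases stepval_mem a b t 0 with h1 | h1 <;> rw [h1] <;> intro hc <;>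
                first | exact hca hc.symm | exact hcb hc.symm
            · rcases stepval_mem a b t (0 - 1) with h1 | h1 <;> rw [h1] <;> intro hc
              · exact hcna (by linarith)
              · exact hcbb (by linarith)

lemma seedφ_spec (ha : 0 < a) (hb : 0 < b) (ht0 : 0 < t) (ht1 : t < 1) (c : ℝ) :
    SeedGood a b t c (seedφ a b t c) := by
  unfold seedφ
  rw [dif_pos (seed_exists a b t ha hb ht0 ht1 c)]
  exact (seed_exists a b t ha hb ht0 ht1 c).choose_spec

noncomputable def bld (hdec : ∀ v : V, v ≠ r → G.dist r (par v) < G.dist r v) (v : V) :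
    ℤ × V × V :=
  if hv : v = r then
    (1, pickv G h v (-stepval a b t 0) v, pickv G h v (stepval a b t 1) v)
  else
    if (bld hdec (par v)).2.2 = v then
      ((bld hdec (par v)).1 + 1, par v,
        pickv G h v (stepval a b t ((bld hdec (par v)).1 + 1)) (par v))
    else if (bld hdec (par v)).2.1 = v then
      ((bld hdec (par v)).1 - 1,
        pickv G h v (-stepval a b t ((bld hdec (par v)).1 - 1 - 1)) (par v), par v)
    else
      (seedφ a b t (h (par v) - h v),
        pickv G h v (-stepval a b t (seedφ a b t (h (par v) - h v) - 1)) (par v),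
        pickv G h v (stepval a b t (seedφ a b t (h (par v) - h v))) (par v))
termination_by G.dist r v
decreasing_by all_goals exact hdec v hv

variable (hdec : ∀ v : V, v ≠ r → G.dist r (par v) < G.dist r v)

noncomputable def phiv (v : V) : ℤ := (bld G h r par a b t hdec v).1
noncomputable def prdv (v : V) : V := (bld G h r par a b t hdec v).2.1
noncomputable def sccv (v : V) : V := (bld G h r par a b t hdec v).2.2

lemma bld_root : bld G h r par a b t hdec r =
    (1, pickv G h r (-stepval a b t 0) r, pickv G h r (stepval a b t 1) r) := by
  rw [bld]
  simp

lemma bld_a {v : V} (hv : v ≠ r) (hs : sccv G h r par a b t hdec (par v) = v) :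
    bld G h r par a b t hdec v =
      (phiv G h r par a b t hdec (par v) + 1, par v,
        pickv G h v (stepval a b t (phiv G h r par a b t hdec (par v) + 1)) (par v)) := by
  simp only [sccv, prdv, phiv] at hs ⊢
  conv_lhs => rw [bld]
  rw [dif_neg hv, if_pos hs]

lemma bld_b {v : V} (hv : v ≠ r) (hs : sccv G h r par a b t hdec (par v) ≠ v)
    (hp : prdv G h r par a b t hdec (par v) = v) :
    bld G h r par a b t hdec v =
      (phiv G h r par a b t hdec (par v) - 1,
        pickv G h v (-stepval a b t (phiv G h r par a b t hdec (par v) - 1 - 1)) (par v),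
        par v) := by
  simp only [sccv, prdv, phiv] at hs hp ⊢
  conv_lhs => rw [bld]
  rw [dif_neg hv, if_neg hs, if_pos hp]

lemma bld_c {v : V} (hv : v ≠ r) (hs : sccv G h r par a b t hdec (par v) ≠ v)
    (hp : prdv G h r par a b t hdec (par v) ≠ v) :
    bld G h r par a b t hdec v =
      (seedφ a b t (h (par v) - h v),
        pickv G h v (-stepval a b t (seedφ a b t (h (par v) - h v) - 1)) (par v),
        pickv G h v (stepval a b t (seedφ a b t (h (par v) - h v))) (par v)) := by
  simp only [sccv, prdv, phiv] at hs hp ⊢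
  conv_lhs => rw [bld]
  rw [dif_neg hv, if_neg hs, if_neg hp]


lemma step_root_ne (ha : 0 < a) (hb : 0 < b) : stepval a b t 1 ≠ -stepval a b t 0 := by
  by_cases hab : a = b
  · apply stepval_ne_of_P a b t ha hb
    have hpp := Pp_pair t 0
    norm_num at hpp
    exact hpp.symm
  · exact stepval_ne_of_ne a b t ha hb hab 1 0

def InvP (v : V) : Prop :=
  G.Adj v (prdv G h r par a b t hdec v) ∧
  G.Adj v (sccv G h r par a b t hdec v) ∧
  prdv G h r par a b t hdec v ≠ sccv G h r par a b t hdec v ∧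
  h (sccv G h r par a b t hdec v) - h v = stepval a b t (phiv G h r par a b t hdec v) ∧
  h (prdv G h r par a b t hdec v) - h v = -stepval a b t (phiv G h r par a b t hdec v - 1) ∧
  (v ≠ r → sccv G h r par a b t hdec v = par v →
    prdv G h r par a b t hdec (par v) = v ∧
    phiv G h r par a b t hdec v = phiv G h r par a b t hdec (par v) - 1) ∧
  (v ≠ r → prdv G h r par a b t hdec v = par v →
    sccv G h r par a b t hdec (par v) = v ∧
    phiv G h r par a b t hdec v = phiv G h r par a b t hdec (par v) + 1) ∧
  (v ≠ r → sccv G h r par a b t hdec (par v) = v →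
    prdv G h r par a b t hdec v = par v ∧
    phiv G h r par a b t hdec v = phiv G h r par a b t hdec (par v) + 1) ∧
  (v ≠ r → prdv G h r par a b t hdec (par v) = v →
    sccv G h r par a b t hdec v = par v ∧
    phiv G h r par a b t hdec v = phiv G h r par a b t hdec (par v) - 1)

lemma inv_all (hpadj : ∀ v : V, v ≠ r → G.Adj v (par v))
    (hEX : ∀ v w : V, ∀ c : ℝ, (c = a ∨ c = b ∨ c = -a ∨ c = -b) →
      (a = b ∨ h w - h v ≠ c) → ∃ u, G.Adj v u ∧ h u - h v = c ∧ u ≠ w)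
    (ha : 0 < a) (hb : 0 < b) (ht0 : 0 < t) (ht1 : t < 1) :
    ∀ v, InvP G h r par a b t hdec v := by
  suffices H : ∀ n : ℕ, ∀ v, G.dist r v = n → InvP G h r par a b t hdec v by
    exact fun v => H _ v rfl
  intro n
  induction n using Nat.strong_induction_on with
  | _ n ih =>
    intro v hn
    by_cases hv : v = r
    · -- root
      rw [hv]
      have e := bld_root G h r par a b t hdec
      have hne1 : -stepval a b t 0 ≠ 0 := by
        rcases stepval_mem a b t 0 with h1 | h1 <;> rw [h1] <;> intro hc <;> linarith
      have hne2 : stepval a b t 1 ≠ 0 := by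
        rcases stepval_mem a b t 1 with h1 | h1 <;> rw [h1] <;> intro hc <;> linarith
      have hx1 := hEX r r (-stepval a b t 0) (negstepval_fourset a b t 0)
        (Or.inr (by rw [sub_self]; exact fun hc => hne1 hc.symm))
      have hx2 := hEX r r (stepval a b t 1) (stepval_fourset a b t 1)
        (Or.inr (by rw [sub_self]; exact fun hc => hne2 hc.symm))
      have sp1 := pickv_spec G h hx1
      have sp2 := pickv_spec G h hx2
      refine ⟨?_, ?_, ?_, ?_, ?_, ?_, ?_, ?_, ?_⟩
      · simp only [prdv, e]; exact sp1.1
      · simp only [sccv, e]; exact sp2.1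
      · simp only [prdv, sccv, e]
        intro heq
        apply step_root_ne a b t ha hb
        rw [← sp2.2.1, ← sp1.2.1, heq]
      · simp only [sccv, phiv, e]; exact sp2.2.1
      · simp only [prdv, phiv, e]
        rw [show (1:ℤ) - 1 = 0 from by ring]
        exact sp1.2.1
      · exact fun hvr => absurd rfl hvr
      · exact fun hvr => absurd rfl hvr
      · exact fun hvr => absurd rfl hvr
      · exact fun hvr => absurd rfl hvr
    · -- non-root
      have hpInv : InvP G h r par a b t hdec (par v) := by
        refine ih (G.dist r (par v)) ?_ (par v) rfl
        rw [← hn]; exact hdec v hv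
      obtain ⟨ip1, ip2, ip3, ip4, ip5, ip6, ip7, ip8, ip9⟩ := hpInv
      by_cases hsA : sccv G h r par a b t hdec (par v) = v
      · -- branch a
        have e := bld_a G h r par a b t hdec hv hsA
        have hchg : h (par v) - h v = -stepval a b t (phiv G h r par a b t hdec (par v)) := by
          rw [hsA] at ip4; linarith
        have hx : ∃ u, G.Adj v u ∧
            h u - h v = stepval a b t (phiv G h r par a b t hdec (par v) + 1) ∧ u ≠ par v := by
          apply hEX v (par v) _ (stepval_fourset a b t _)
          by_cases hab : a = b
          · exact Or.inl hab
          · refine Or.inr ?_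
            rw [hchg]
            exact fun hc => stepval_ne_of_ne a b t ha hb hab _ _ hc.symm
        have sp := pickv_spec G h hx
        refine ⟨?_, ?_, ?_, ?_, ?_, ?_, ?_, ?_, ?_⟩
        · simp only [prdv, e]; exact hpadj v hv
        · simp only [sccv, e]; exact sp.1
        · simp only [prdv, sccv, e]; exact fun heq => sp.2.2 heq.symm
        · simp only [sccv, phiv, e]; exact sp.2.1
        · simp only [prdv, phiv, e]
          rw [add_sub_cancel_right]
          exact hchg
        · intro _ h6
          exfalso
          simp only [sccv, e] at h6
          exact sp.2.2 h6
        · intro _ _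
          exact ⟨hsA, by simp only [phiv, e]⟩
        · intro _ _
          exact ⟨by simp only [prdv, e], by simp only [phiv, e]⟩
        · intro _ h9
          exfalso
          rw [hsA] at ip3
          exact ip3 h9
      · by_cases hpB : prdv G h r par a b t hdec (par v) = v
        · -- branch b
          have e := bld_b G h r par a b t hdec hv hsA hpB
          have hchg : h (par v) - h v = stepval a b t (phiv G h r par a b t hdec (par v) - 1) := by
            rw [hpB] at ip5; linarith
          have hx : ∃ u, G.Adj v u ∧
              h u - h v = -stepval a b t (phiv G h r par a b t hdec (par v) - 1 - 1) ∧
              u ≠ par v := by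
            apply hEX v (par v) _ (negstepval_fourset a b t _)
            by_cases hab : a = b
            · exact Or.inl hab
            · refine Or.inr ?_
              rw [hchg]
              exact stepval_ne_of_ne a b t ha hb hab _ _
          have sp := pickv_spec G h hx
          refine ⟨?_, ?_, ?_, ?_, ?_, ?_, ?_, ?_, ?_⟩
          · simp only [prdv, e]; exact sp.1
          · simp only [sccv, e]; exact hpadj v hv
          · simp only [prdv, sccv, e]; exact sp.2.2
          · simp only [sccv, phiv, e]
            exact hchg
          · simp only [prdv, phiv, e]; exact sp.2.1
          · intro _ _
            exact ⟨hpB, by simp only [phiv, e]⟩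
          · intro _ h7
            exfalso
            simp only [prdv, e] at h7
            exact sp.2.2 h7
          · intro _ h8
            exact absurd h8 hsA
          · intro _ _
            exact ⟨by simp only [sccv, e], by simp only [phiv, e]⟩
        · -- branch c : seed
          have e := bld_c G h r par a b t hdec hv hsA hpB
          have sg := seedφ_spec a b t ha hb ht0 ht1 (h (par v) - h v)
          have hx2 : ∃ u, G.Adj v u ∧
              h u - h v = stepval a b t (seedφ a b t (h (par v) - h v)) ∧ u ≠ par v := by
            apply hEX v (par v) _ (stepval_fourset a b t _)
            by_cases hab : a = b
            · exact Or.inl hab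
            · exact Or.inr (fun hc => (sg.2 hab).1 hc.symm)
          have hx1 : ∃ u, G.Adj v u ∧
              h u - h v = -stepval a b t (seedφ a b t (h (par v) - h v) - 1) ∧ u ≠ par v := by
            apply hEX v (par v) _ (negstepval_fourset a b t _)
            by_cases hab : a = b
            · exact Or.inl hab
            · exact Or.inr (fun hc => (sg.2 hab).2 hc.symm)
          have sp1 := pickv_spec G h hx1
          have sp2 := pickv_spec G h hx2
          refine ⟨?_, ?_, ?_, ?_, ?_, ?_, ?_, ?_, ?_⟩
          · simp only [prdv, e]; exact sp1.1
          · simp only [sccv, e]; exact sp2.1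
          · simp only [prdv, sccv, e]
            intro heq
            apply sg.1
            rw [← sp2.2.1, ← sp1.2.1, heq]
          · simp only [sccv, phiv, e]; exact sp2.2.1
          · simp only [prdv, phiv, e]; exact sp1.2.1
          · intro _ h6
            exfalso
            simp only [sccv, e] at h6
            exact sp2.2.2 h6
          · intro _ h7
            exfalso
            simp only [prdv, e] at h7
            exact sp1.2.2 h7
          · intro _ h8
            exact absurd h8 hsA
          · intro _ h9
            exact absurd h9 hpB


lemma par_of_adj (hT : G.IsTree)
    (hpuniq : ∀ v u : V, v ≠ r → G.Adj v u → G.dist r u + 1 = G.dist r v → u = par v)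
    {v u : V} (hadj : G.Adj v u) : (v ≠ r ∧ u = par v) ∨ (u ≠ r ∧ v = par u) := by
  rcases tree_adj_dist hT r hadj with hd | hd
  · right
    have hur : u ≠ r := by
      intro hu
      rw [hu, SimpleGraph.dist_self] at hd
      omega
    exact ⟨hur, hpuniq u v hur hadj.symm hd⟩
  · left
    have hvr : v ≠ r := by
      intro hvv
      rw [hvv, SimpleGraph.dist_self] at hd
      omega
    exact ⟨hvr, hpuniq v u hvr hadj hd⟩

variable (hT : G.IsTree)
    (hpadj : ∀ v : V, v ≠ r → G.Adj v (par v))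
    (hpuniq : ∀ v u : V, v ≠ r → G.Adj v u → G.dist r u + 1 = G.dist r v → u = par v)
    (hEX : ∀ v w : V, ∀ c : ℝ, (c = a ∨ c = b ∨ c = -a ∨ c = -b) →
      (a = b ∨ h w - h v ≠ c) → ∃ u, G.Adj v u ∧ h u - h v = c ∧ u ≠ w)
    (ha : 0 < a) (hb : 0 < b) (ht0 : 0 < t) (ht1 : t < 1)

include hT hpadj hpuniq hEX ha hb ht0 ht1 in
lemma link_scc (v : V) :
    prdv G h r par a b t hdec (sccv G h r par a b t hdec v) = v ∧
    phiv G h r par a b t hdec (sccv G h r par a b t hdec v)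
      = phiv G h r par a b t hdec v + 1 := by
  have Iv := inv_all G h r par a b t hdec hpadj hEX ha hb ht0 ht1 v
  obtain ⟨i1, i2, i3, i4, i5, i6, i7, i8, i9⟩ := Iv
  rcases par_of_adj G r par hT hpuniq i2 with ⟨hvr, hu⟩ | ⟨hur, hpu⟩
  · obtain ⟨hp6, hφ6⟩ := i6 hvr hu
    constructor
    · rw [hu]; exact hp6
    · rw [hu]; omega
  · have Iu := inv_all G h r par a b t hdec hpadj hEX ha hb ht0 ht1
      (sccv G h r par a b t hdec v)
    obtain ⟨j1, j2, j3, j4, j5, j6, j7, j8, j9⟩ := Iu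
    obtain ⟨hpj, hφj⟩ := j8 hur (by rw [← hpu])
    constructor
    · rw [hpj, ← hpu]
    · rw [hφj, ← hpu]

include hT hpadj hpuniq hEX ha hb ht0 ht1 in
lemma link_prd (v : V) :
    sccv G h r par a b t hdec (prdv G h r par a b t hdec v) = v ∧
    phiv G h r par a b t hdec (prdv G h r par a b t hdec v)
      = phiv G h r par a b t hdec v - 1 := by
  have Iv := inv_all G h r par a b t hdec hpadj hEX ha hb ht0 ht1 v
  obtain ⟨i1, i2, i3, i4, i5, i6, i7, i8, i9⟩ := Iv
  rcases par_of_adj G r par hT hpuniq i1 with ⟨hvr, hu⟩ | ⟨hur, hpu⟩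
  · obtain ⟨hp7, hφ7⟩ := i7 hvr hu
    constructor
    · rw [hu]; exact hp7
    · rw [hu]; omega
  · have Iu := inv_all G h r par a b t hdec hpadj hEX ha hb ht0 ht1
      (prdv G h r par a b t hdec v)
    obtain ⟨j1, j2, j3, j4, j5, j6, j7, j8, j9⟩ := Iu
    obtain ⟨hpj, hφj⟩ := j9 hur (by rw [← hpu])
    constructor
    · rw [hpj, ← hpu]
    · rw [hφj, ← hpu]

end Constr


/-- Existence of constant slope laminations: if `T` is a homogeneous coarsely oriented
tree with at least two strictly height-increasing and two strictly height-decreasing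
edges at each vertex, then there is `β₀ > 0` such that for every `0 ≤ β ≤ β₀` there
are `C > 0` and a lamination of `T` by lines of slope `(β, C)`. -/
theorem exists_constant_slope_lamination {V : Type u} (G : SimpleGraph V) (h : V → ℝ)
    (hT : G.IsTree) (hlf : ∀ v, (G.neighborSet v).Finite) (hhom : Homogeneous G h)
    (hup : ∀ v : V, ∃ u u' : V, u ≠ u' ∧ G.Adj v u ∧ G.Adj v u' ∧ h v < h u ∧ h v < h u')
    (hdown : ∀ v : V, ∃ u u' : V, u ≠ u' ∧ G.Adj v u ∧ G.Adj v u' ∧ h u < h v ∧ h u' < h v) :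
    ∃ β₀ : ℝ, 0 < β₀ ∧ ∀ β : ℝ, 0 ≤ β → β ≤ β₀ →
      ∃ C : ℝ, 0 < C ∧ ∃ (ι : Type u) (L : ι → ℤ → V), IsLamination G h β C L := by
  classical
  obtain ⟨r⟩ := hT.isConnected.nonempty
  -- transfer of height changes via homogeneity
  have trans : ∀ v w : V, ∀ c : ℝ, (∃ x, G.Adj v x ∧ h x - h v = c) →
      ∃ x, G.Adj w x ∧ h x - h w = c := by
    rintro v w c ⟨x, hx, hc⟩
    obtain ⟨σ, hσ⟩ := hhom v w
    refine ⟨σ ⟨x, hx⟩, (σ ⟨x, hx⟩).2, ?_⟩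
    rw [← hσ ⟨x, hx⟩]
    exact hc
  have htwo : ∀ c : ℝ,
      (∃ x y : V, x ≠ y ∧ G.Adj r x ∧ G.Adj r y ∧ h x - h r = c ∧ h y - h r = c) →
      ∀ v, ∃ x y : V, x ≠ y ∧ G.Adj v x ∧ G.Adj v y ∧ h x - h v = c ∧ h y - h v = c := by
    rintro c ⟨x, y, hxy, hax, hay, hcx, hcy⟩ v
    obtain ⟨σ, hσ⟩ := hhom r v
    refine ⟨σ ⟨x, hax⟩, σ ⟨y, hay⟩, ?_, (σ ⟨x, hax⟩).2, (σ ⟨y, hay⟩).2,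
      by rw [← hσ ⟨x, hax⟩]; exact hcx, by rw [← hσ ⟨y, hay⟩]; exact hcy⟩
    intro heq
    exact hxy (Subtype.mk_eq_mk.mp (σ.injective (Subtype.ext heq)))
  -- choose the up-step a
  obtain ⟨u₁, u₂, hu12, hadj1, hadj2, hup1, hup2⟩ := hup r
  set a : ℝ := h u₁ - h r with ha_def
  have ha : 0 < a := by rw [ha_def]; linarith
  -- choose the down-step b and the pick-existence property
  obtain ⟨b, hb, hEX⟩ : ∃ b : ℝ, 0 < b ∧
      ∀ v w : V, ∀ c : ℝ, (c = a ∨ c = b ∨ c = -a ∨ c = -b) →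
        (a = b ∨ h w - h v ≠ c) → ∃ x, G.Adj v x ∧ h x - h v = c ∧ x ≠ w := by
    by_cases hcase : ∀ x, G.Adj r x → h r < h x → h x - h r = a
    · -- all up-steps at r equal a; then all down-steps equal -a and we have multiplicity two
      refine ⟨a, ha, ?_⟩
      have hdc : ∀ x, G.Adj r x → h x < h r → h x - h r = -a := by
        intro x hx hlt
        obtain ⟨y, hy, hyc⟩ := trans x r (h r - h x) ⟨r, hx.symm, by ring⟩
        have hy2 : h r < h y := by linarith
        have := hcase y hy hy2
        linarith
      obtain ⟨d₁, d₂, hd12, hdadj1, hdadj2, hdn1, hdn2⟩ := hdown r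
      have htwoa : ∀ v, ∃ x y : V, x ≠ y ∧ G.Adj v x ∧ G.Adj v y ∧
          h x - h v = a ∧ h y - h v = a :=
        htwo a ⟨u₁, u₂, hu12, hadj1, hadj2, rfl, hcase u₂ hadj2 hup2⟩
      have htwona : ∀ v, ∃ x y : V, x ≠ y ∧ G.Adj v x ∧ G.Adj v y ∧
          h x - h v = -a ∧ h y - h v = -a :=
        htwo (-a) ⟨d₁, d₂, hd12, hdadj1, hdadj2, hdc d₁ hdadj1 hdn1, hdc d₂ hdadj2 hdn2⟩
      intro v w c hc4 _
      have hc' : c = a ∨ c = -a := by rcases hc4 with h1 | h1 | h1 | h1 <;> [left; left; right; right] <;> linarith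
      have hpair : ∃ x y : V, x ≠ y ∧ G.Adj v x ∧ G.Adj v y ∧
          h x - h v = c ∧ h y - h v = c := by
        rcases hc' with rfl | rfl
        · exact htwoa v
        · exact htwona v
      obtain ⟨x, y, hxy, hax, hay, hcx, hcy⟩ := hpair
      by_cases hxw : x = w
      · exact ⟨y, hay, hcy, by rw [← hxw]; exact (Ne.symm hxy)⟩
      · exact ⟨x, hax, hcx, hxw⟩
    · -- there is a second up-step value b ≠ a
      push_neg at hcase
      obtain ⟨u₃, hadj3, hlt3, hne3⟩ := hcase
      refine ⟨h u₃ - h r, by linarith, ?_⟩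
      set b : ℝ := h u₃ - h r with hb_def
      have hex4 : ∀ c : ℝ, (c = a ∨ c = b ∨ c = -a ∨ c = -b) →
          ∀ v, ∃ x, G.Adj v x ∧ h x - h v = c := by
        intro c hc v
        rcases hc with rfl | rfl | rfl | rfl
        · exact trans r v a ⟨u₁, hadj1, rfl⟩
        · exact trans r v b ⟨u₃, hadj3, rfl⟩
        · exact trans u₁ v (-a) ⟨r, hadj1.symm, by rw [ha_def]; ring⟩
        · exact trans u₃ v (-b) ⟨r, hadj3.symm, by rw [hb_def]; ring⟩
      intro v w c hc4 hcond
      rcases hcond with hab | hwv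
      · exact absurd hab.symm hne3
      · obtain ⟨x, hx, hcx⟩ := hex4 c hc4 v
        refine ⟨x, hx, hcx, ?_⟩
        intro hxw
        rw [hxw] at hcx
        exact hwv hcx
  -- the parent function
  have hexpar : ∀ v : V, v ≠ r → ∃ u, G.Adj v u ∧ G.dist r u + 1 = G.dist r v :=
    fun v hv => tree_exists_parent hT hv
  set par : V → V := fun v => if hv : v = r then v else (hexpar v hv).choose with hpar_def
  have hpadj : ∀ v : V, v ≠ r → G.Adj v (par v) := by
    intro v hv
    rw [hpar_def]
    simp only [dif_neg hv]
    exact (hexpar v hv).choose_spec.1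
  have hpdist : ∀ v : V, v ≠ r → G.dist r (par v) + 1 = G.dist r v := by
    intro v hv
    rw [hpar_def]
    simp only [dif_neg hv]
    exact (hexpar v hv).choose_spec.2
  have hpuniq : ∀ v u : V, v ≠ r → G.Adj v u → G.dist r u + 1 = G.dist r v → u = par v := by
    intro v u hv hadj hd
    exact tree_closer_unique hT r hadj (hpadj v hv) hd (hpdist v hv)
  have hdec : ∀ v : V, v ≠ r → G.dist r (par v) < G.dist r v := by
    intro v hv
    have := hpdist v hv
    omega
  -- the slope bound
  refine ⟨a / 2, by linarith, ?_⟩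
  intro β hβ0 hβ1
  have hab0 : 0 < a + b := by linarith
  set t : ℝ := (β + b) / (a + b) with ht_def
  have ht0 : 0 < t := div_pos (by linarith) hab0
  have ht1 : t < 1 := by rw [ht_def, div_lt_one hab0]; linarith
  have hβt : t * (a + b) - b = β := by
    rw [ht_def, div_mul_cancel₀]
    · ring
    · exact ne_of_gt hab0
  refine ⟨4 * (a + b) + 1, by linarith, ?_⟩
  -- instantiate the construction
  have hInv := inv_all G h r par a b t hdec hpadj hEX ha hb ht0 ht1
  have hlscc := link_scc G h r par a b t hdec hT hpadj hpuniq hEX ha hb ht0 ht1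
  have hlprd := link_prd G h r par a b t hdec hT hpadj hpuniq hEX ha hb ht0 ht1
  have hadjS : ∀ v, G.Adj v (sccv G h r par a b t hdec v) := fun v => (hInv v).2.1
  have hnePS : ∀ v, prdv G h r par a b t hdec v ≠ sccv G h r par a b t hdec v :=
    fun v => (hInv v).2.2.1
  have hstepS : ∀ v, h (sccv G h r par a b t hdec v) - h v
      = stepval a b t (phiv G h r par a b t hdec v) := fun v => (hInv v).2.2.2.1
  have hstepP : ∀ v, h (prdv G h r par a b t hdec v) - h v
      = -stepval a b t (phiv G h r par a b t hdec v - 1) := fun v => (hInv v).2.2.2.2.1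
  set E : Equiv.Perm V := ⟨sccv G h r par a b t hdec, prdv G h r par a b t hdec,
    fun v => (hlscc v).1, fun v => (hlprd v).1⟩ with hE_def
  have hE1 : ∀ (n : ℤ) (v : V), (E ^ (n + 1)) v = sccv G h r par a b t hdec ((E ^ n) v) := by
    intro n v
    rw [add_comm, zpow_add, zpow_one, Equiv.Perm.mul_apply]
    rfl
  have hE2 : ∀ (n : ℤ) (v : V), (E ^ (n - 1)) v = prdv G h r par a b t hdec ((E ^ n) v) := by
    intro n v
    rw [show n - 1 = -1 + n from by ring, zpow_add, zpow_neg_one, Equiv.Perm.mul_apply]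
    rfl
  have hphi : ∀ (n : ℤ) (v : V), phiv G h r par a b t hdec ((E ^ n) v)
      = phiv G h r par a b t hdec v + n := by
    intro n
    induction n using Int.induction_on with
    | zero => intro v; simp
    | succ i ih =>
      intro v
      rw [hE1 i v, (hlscc ((E ^ (i:ℤ)) v)).2, ih v]
      ring
    | pred i ih =>
      intro v
      rw [show (-(i:ℤ) - 1) = (-(i:ℤ)) - 1 from rfl, hE2 (-(i:ℤ)) v,
        (hlprd ((E ^ (-(i:ℤ))) v)).2, ih v]
      ring
  have hPp01 := Pp_mem t ht0.le ht1.le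
  have hstepval : ∀ k : ℤ, stepval a b t k = (a + b) * ((Pp t k : ℤ) : ℝ) - b := by
    intro k
    rcases hPp01 k with h0 | h1
    · unfold stepval
      rw [if_neg (by omega), h0]
      push_cast; ring
    · unfold stepval
      rw [if_pos h1, h1]
      push_cast; ring
  have hheight : ∀ (n : ℤ) (v : V), h ((E ^ n) v) = h v
      + (a + b) * (((Ff t (phiv G h r par a b t hdec v + n) : ℤ) : ℝ)
        - ((Ff t (phiv G h r par a b t hdec v) : ℤ) : ℝ)) - b * n := by
    intro n
    induction n using Int.induction_on with
    | zero => intro v; simp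
    | succ i ih =>
      intro v
      rw [hE1 i v]
      have h1 := hstepS ((E ^ (i:ℤ)) v)
      rw [hphi (i:ℤ) v, hstepval] at h1
      have h3 := ih v
      have hPp : ((Pp t (phiv G h r par a b t hdec v + i) : ℤ) : ℝ)
          = ((Ff t (phiv G h r par a b t hdec v + i + 1) : ℤ) : ℝ)
            - ((Ff t (phiv G h r par a b t hdec v + i) : ℤ) : ℝ) := by
        unfold Pp; push_cast; ring
      rw [show phiv G h r par a b t hdec v + ((i:ℤ) + 1)
          = phiv G h r par a b t hdec v + (i:ℤ) + 1 from by ring]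
      push_cast at h1 h3 hPp ⊢
      linear_combination h1 + h3 + (a + b) * hPp
    | pred i ih =>
      intro v
      rw [show (-(i:ℤ) - 1) = (-(i:ℤ)) - 1 from rfl, hE2 (-(i:ℤ)) v]
      have h1 := hstepP ((E ^ (-(i:ℤ))) v)
      rw [hphi (-(i:ℤ)) v, hstepval] at h1
      have h3 := ih v
      have hPp : ((Pp t (phiv G h r par a b t hdec v + -(i:ℤ) - 1) : ℤ) : ℝ)
          = ((Ff t (phiv G h r par a b t hdec v + -(i:ℤ)) : ℤ) : ℝ)
            - ((Ff t (phiv G h r par a b t hdec v + -(i:ℤ) - 1) : ℤ) : ℝ) := by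
        unfold Pp
        rw [show phiv G h r par a b t hdec v + -(i:ℤ) - 1 + 1
          = phiv G h r par a b t hdec v + -(i:ℤ) from by ring]
        push_cast; ring
      rw [show phiv G h r par a b t hdec v + (-(i:ℤ) - 1)
          = phiv G h r par a b t hdec v + -(i:ℤ) - 1 from by ring]
      push_cast at h1 h3 hPp ⊢
      linear_combination h1 + h3 - (a + b) * hPp
  have hchaindist : ∀ (v : V) (k : ℕ), G.dist v ((E ^ (k:ℤ)) v) = k := by
    intro v k
    have hadjc : ∀ i : ℕ, G.Adj ((E ^ (i:ℤ)) v) ((E ^ ((i+1:ℕ):ℤ)) v) := by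
      intro i
      rw [show (((i+1:ℕ)):ℤ) = (i:ℤ) + 1 from by push_cast; ring, hE1]
      exact hadjS _
    have hnb : ∀ i : ℕ, (E ^ ((i+2:ℕ):ℤ)) v ≠ (E ^ (i:ℤ)) v := by
      intro i heq
      have e1 : (E ^ ((i+2:ℕ):ℤ)) v
          = sccv G h r par a b t hdec (sccv G h r par a b t hdec ((E ^ (i:ℤ)) v)) := by
        rw [show (((i+2:ℕ)):ℤ) = ((i:ℤ) + 1) + 1 from by push_cast; ring, hE1, hE1]
      rw [e1] at heq
      have h2 := congrArg (prdv G h r par a b t hdec) heq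
      rw [(hlscc _).1] at h2
      exact hnePS ((E ^ (i:ℤ)) v) h2.symm
    have := tree_chain_dist hT (fun i : ℕ => (E ^ (i:ℤ)) v) hadjc hnb k
    simpa using this
  have hdist2 : ∀ (v : V) (m n : ℤ), m ≤ n →
      G.dist ((E ^ m) v) ((E ^ n) v) = (n - m).natAbs := by
    intro v m n hmn
    have hk : (((n - m).toNat : ℤ)) + m = n := by omega
    have he : (E ^ (((n - m).toNat : ℕ):ℤ)) ((E ^ m) v) = (E ^ n) v := by
      rw [← Equiv.Perm.mul_apply, ← zpow_add, hk]
    rw [← he, hchaindist ((E ^ m) v) ((n - m).toNat)]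
    omega
  -- the lamination indexed by orbits
  set Sd : Setoid V := ⟨fun x y => ∃ n : ℤ, (E ^ n) x = y,
    ⟨fun x => ⟨0, by simp⟩,
     fun {x y} hxy => by
       obtain ⟨n, hn⟩ := hxy
       refine ⟨-n, ?_⟩
       rw [← hn, ← Equiv.Perm.mul_apply, ← zpow_add]
       simp
     ,
     fun {x y z} hxy hyz => by
       obtain ⟨n, hn⟩ := hxy
       obtain ⟨m, hm⟩ := hyz
       refine ⟨m + n, ?_⟩
       rw [← hm, ← hn, ← Equiv.Perm.mul_apply, ← zpow_add]
     ⟩⟩ with hSd_def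
  refine ⟨Quotient Sd, fun q n => (E ^ n) q.out, ?_, ?_⟩
  · intro q
    refine ⟨?_, ?_⟩
    · intro n m
      rcases le_total m n with hmn | hnm
      · rw [SimpleGraph.dist_comm]
        exact hdist2 q.out m n hmn
      · rw [hdist2 q.out n m hnm]
        omega
    · intro n m
      have h1 := hheight n q.out
      have h2 := hheight m q.out
      have hb1 := Ff_bound t (phiv G h r par a b t hdec q.out + n)
      have hb2 := Ff_bound t (phiv G h r par a b t hdec q.out + m)
      have key : h ((E ^ n) q.out) - h ((E ^ m) q.out) - β * ((n:ℝ) - (m:ℝ))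
          = (a + b) * ((((Ff t (phiv G h r par a b t hdec q.out + n) : ℤ) : ℝ)
              - t * (((phiv G h r par a b t hdec q.out + n : ℤ)) : ℝ))
            - (((Ff t (phiv G h r par a b t hdec q.out + m) : ℤ) : ℝ)
              - t * (((phiv G h r par a b t hdec q.out + m : ℤ)) : ℝ))) := by
        rw [h1, h2, ← hβt]
        push_cast
        ring
      have hX : |(((Ff t (phiv G h r par a b t hdec q.out + n) : ℤ) : ℝ)
              - t * (((phiv G h r par a b t hdec q.out + n : ℤ)) : ℝ))
            - (((Ff t (phiv G h r par a b t hdec q.out + m) : ℤ) : ℝ)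
              - t * (((phiv G h r par a b t hdec q.out + m : ℤ)) : ℝ))| ≤ 4 := by
        rw [abs_le] at hb1 hb2 ⊢
        constructor <;> linarith
      have hcast : ((n : ℝ) - (m : ℝ)) = (((n - m : ℤ)) : ℝ) := by push_cast; ring
      rw [← hcast] at *
      calc |h ((E ^ n) q.out) - h ((E ^ m) q.out) - β * ((n:ℝ) - (m:ℝ))|
          = (a + b) * |(((Ff t (phiv G h r par a b t hdec q.out + n) : ℤ) : ℝ)
              - t * (((phiv G h r par a b t hdec q.out + n : ℤ)) : ℝ))
            - (((Ff t (phiv G h r par a b t hdec q.out + m) : ℤ) : ℝ)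
              - t * (((phiv G h r par a b t hdec q.out + m : ℤ)) : ℝ))| := by
            rw [key, abs_mul, abs_of_pos hab0]
        _ ≤ (a + b) * 4 := by
            apply mul_le_mul_of_nonneg_left hX (le_of_lt hab0)
        _ ≤ 4 * (a + b) + 1 := by linarith
  · intro v
    refine ⟨Quotient.mk Sd v, ?_, ?_⟩
    · obtain ⟨n, hn⟩ := Quotient.exact (Quotient.out_eq (Quotient.mk Sd v))
      exact ⟨n, hn⟩
    · intro q hq
      obtain ⟨n, hn⟩ := hq
      rw [← Quotient.out_eq q]
      exact Quotient.sound ⟨n, hn⟩
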